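/- For every vertex u of T*, there exists a unique node N of the rhombus tree H* with a proper QR-encoding such that π(N, v_0) = u. -/

import Mathlib

/-- Vertices of the infinite complete outerplanar graph `T*`. -/
def TstarVert (l : List Bool) : Prop :=
  l = [false] ∨ l = [false, true] ∨ ∃ t : List Bool, l = false :: true :: false :: t

/-- The digit translation `b`: `0 ↦ 0`, `1 ↦ 10`, `2 ↦ 11`. -/
def bmap (c : List (Fin 3)) : List Bool :=
  (c.map (fun d => if d = 0 then [false] else if d = 1 then [true, false] else [true, true])).flatten

/-- Computes the pair `(π(N,v₀), π(N,v₁))` for the node of `H*` whose path (below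
the root) is `pref ++ rest`, given the pair for the node with path `pref`. At each
step, `π(N,v₂) = 0·b(pref)` and `π(N,v₃) = 0·b(pref)·1`; descending through the arc
`0`/`1`/`2` yields the new base pair `(v₀,v₂)`/`(v₂,v₃)`/`(v₁,v₃)`. -/
def v0v1Aux (pref : List (Fin 3)) (st : List Bool × List Bool) :
    List (Fin 3) → List Bool × List Bool
  | [] => st
  | j :: rest =>
    v0v1Aux (pref ++ [j])
      (if j = 0 then (st.1, [false, true, false] ++ bmap pref)
       else if j = 1 then ([false, true, false] ++ bmap pref,
          [false, true, false] ++ bmap pref ++ [true])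
       else (st.2, [false, true, false] ++ bmap pref ++ [true])) rest

/-- `π(N, v₀)` for the node `N` of `H*` with trinary path `c` below the root. -/
def piV0 (c : List (Fin 3)) : List Bool :=
  (v0v1Aux [] ([false], [false, true]) c).1

/-- The node of `H*` with QR-encoding `((q_i)_{i∈[m]}, (ρ_i)_{i∈[m]})` (with the
trailing `q_{m+1} = 0` omitted): take `q_1` forward steps, turn according to
`ρ_1`, etc. -/
def nodeOfQR (qs : List ℕ) (rs : List Bool) : List (Fin 3) :=
  ((qs.zip rs).map
    (fun p => List.replicate p.1 (1 : Fin 3) ++ [if p.2 then (2 : Fin 3) else 0])).flatten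

/-- The QR-encoding `((q_i)_{i∈[m]}, (ρ_i)_{i∈[m]})` is proper: the trailing
`q_{m+1}` vanishes (built into `nodeOfQR`) and `q_m > 0` or `m = 1`. -/
def ProperQR (qs : List ℕ) (rs : List Bool) : Prop :=
  qs.length = rs.length ∧ 1 ≤ qs.length ∧ (qs.length = 1 ∨ qs.getLast? ≠ some 0)

-- auxiliary defs
def trn (r : Bool) : Fin 3 := if r then 2 else 0

def dec3 : List Bool → List (Fin 3) × Bool
  | [] => ([], false)
  | [true] => ([], true)
  | false :: t => (0 :: (dec3 t).1, (dec3 t).2)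
  | true :: false :: t => (1 :: (dec3 t).1, (dec3 t).2)
  | true :: true :: t => (2 :: (dec3 t).1, (dec3 t).2)

def qrOf : List (Fin 3) → Bool → List ℕ × List Bool
  | [], r => ([1], [r])
  | x :: t, r =>
    if x = 0 then (0 :: (qrOf t r).1, false :: (qrOf t r).2)
    else if x = 2 then (0 :: (qrOf t r).1, true :: (qrOf t r).2)
    else (((qrOf t r).1.headI + 1) :: (qrOf t r).1.tail, (qrOf t r).2)

def decode : List Bool → List ℕ × List Bool
  | [false] => ([0], [false])
  | [false, true] => ([0], [true])
  | _ :: _ :: _ :: t => qrOf (dec3 t).1 (dec3 t).2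
  | _ => ([0], [false])

-- basic lemmas
theorem bmap_cons (x : Fin 3) (d : List (Fin 3)) :
    bmap (x :: d) = (if x = 0 then [false] else if x = 1 then [true, false]
      else [true, true]) ++ bmap d := by
  simp [bmap]

theorem v0v1Aux_append (c1 : List (Fin 3)) : ∀ (pref : List (Fin 3)) st c2,
    v0v1Aux pref st (c1 ++ c2) = v0v1Aux (pref ++ c1) (v0v1Aux pref st c1) c2 := by
  induction c1 with
  | nil => intro pref st c2; simp [v0v1Aux]
  | cons j c1 ih =>
    intro pref st c2
    simp only [List.cons_append, v0v1Aux]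
    rw [show pref ++ j :: c1 = (pref ++ [j]) ++ c1 by simp]
    exact ih _ _ _

theorem piV0_formula (d : List (Fin 3)) (r : Bool) :
    piV0 (d ++ [1, trn r]) =
      false :: true :: false :: (bmap d ++ if r then [true] else []) := by
  unfold piV0
  rw [v0v1Aux_append]
  cases r <;> simp [v0v1Aux, trn]

theorem dec3_bmap (d : List (Fin 3)) (r : Bool) :
    dec3 (bmap d ++ if r then [true] else []) = (d, r) := by
  induction d with
  | nil => cases r <;> simp [bmap, dec3]
  | cons x t ih =>
    fin_cases x <;>
      simp only [bmap_cons, List.append_assoc, if_pos, if_neg, List.cons_append,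
        List.nil_append, reduceIte, Fin.isValue] <;>
      · show dec3 _ = _
        simp [dec3, ih]

theorem bmap_dec3 (t : List Bool) :
    bmap (dec3 t).1 ++ (if (dec3 t).2 then [true] else []) = t := by
  induction t using dec3.induct <;> simp_all [dec3, bmap, bmap_cons] <;> assumption

theorem nodeOfQR_cons (q : ℕ) (qs : List ℕ) (r : Bool) (rs : List Bool) :
    nodeOfQR (q :: qs) (r :: rs) =
      List.replicate q 1 ++ (if r then (2 : Fin 3) else 0) :: nodeOfQR qs rs := by
  simp [nodeOfQR]

theorem qrOf_cons (x : Fin 3) (t : List (Fin 3)) (r : Bool) :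
    qrOf (x :: t) r =
      if x = 0 then (0 :: (qrOf t r).1, false :: (qrOf t r).2)
      else if x = 2 then (0 :: (qrOf t r).1, true :: (qrOf t r).2)
      else (((qrOf t r).1.headI + 1) :: (qrOf t r).1.tail, (qrOf t r).2) := rfl

theorem qrOf_inv (d : List (Fin 3)) (r : Bool) :
    (qrOf d r).1.length = (qrOf d r).2.length ∧ (qrOf d r).1 ≠ [] ∧
      (qrOf d r).1.getLast? ≠ some 0 := by
  induction d with
  | nil => simp [qrOf]
  | cons x t ih =>
    obtain ⟨h1, h2, h3⟩ := ih
    obtain ⟨a, l, hal⟩ : ∃ a l, (qrOf t r).1 = a :: l :=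
      List.exists_cons_of_ne_nil h2
    rw [hal] at h1 h3
    by_cases hx0 : x = 0
    · rw [qrOf_cons, if_pos hx0, hal]
      exact ⟨by simp [h1], by simp, by rwa [List.getLast?_cons_cons]⟩
    · by_cases hx2 : x = 2
      · rw [qrOf_cons, if_neg hx0, if_pos hx2, hal]
        exact ⟨by simp [h1], by simp, by rwa [List.getLast?_cons_cons]⟩
      · rw [qrOf_cons, if_neg hx0, if_neg hx2, hal]
        cases l with
        | nil =>
          refine ⟨by simpa using h1, by simp, by simp⟩
        | cons b m =>
          refine ⟨by simpa using h1, by simp, ?_⟩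
          simp only [List.headI, List.tail_cons]
          rw [List.getLast?_cons_cons]
          exact h3

theorem node_qrOf (d : List (Fin 3)) (r : Bool) :
    nodeOfQR (qrOf d r).1 (qrOf d r).2 = d ++ [1, trn r] := by
  induction d with
  | nil => cases r <;> simp [qrOf, nodeOfQR, trn]
  | cons x t ih =>
    obtain ⟨h1, h2, -⟩ := qrOf_inv t r
    obtain ⟨a, l, hal⟩ : ∃ a l, (qrOf t r).1 = a :: l :=
      List.exists_cons_of_ne_nil h2
    have h2' : (qrOf t r).2 ≠ [] := by
      refine List.ne_nil_of_length_pos ?_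
      rw [← h1, hal]; simp
    obtain ⟨b, m, hbm⟩ : ∃ b m, (qrOf t r).2 = b :: m :=
      List.exists_cons_of_ne_nil h2'
    by_cases hx0 : x = 0
    · subst hx0
      rw [qrOf_cons, if_pos rfl]
      rw [hal, hbm] at ih ⊢
      rw [nodeOfQR_cons]
      simp [ih, trn]
    · by_cases hx2 : x = 2
      · subst hx2
        rw [qrOf_cons, if_neg (by decide), if_pos rfl]
        rw [hal, hbm] at ih ⊢
        rw [nodeOfQR_cons]
        simp [ih, trn]
      · have hx1 : x = 1 := by fin_cases x <;> simp_all
        subst hx1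
        rw [qrOf_cons, if_neg (by decide), if_neg (by decide)]
        rw [hal, hbm] at ih ⊢
        simp only [List.headI, List.tail_cons]
        rw [nodeOfQR_cons, List.replicate_succ]
        rw [nodeOfQR_cons] at ih
        simp only [List.cons_append, ih]

theorem qrOf_replicate (k : ℕ) (r : Bool) :
    qrOf (List.replicate k 1) r = ([k + 1], [r]) := by
  induction k with
  | zero => rfl
  | succ k ih =>
    rw [List.replicate_succ, qrOf_cons, if_neg (by decide), if_neg (by decide), ih]
    rfl

theorem qrOf_replicate_append (k : ℕ) (t : List (Fin 3)) (r : Bool) :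
    qrOf (List.replicate k 1 ++ t) r =
      (((qrOf t r).1.headI + k) :: (qrOf t r).1.tail, (qrOf t r).2) := by
  induction k with
  | zero =>
    obtain ⟨-, h2, -⟩ := qrOf_inv t r
    obtain ⟨a, l, hal⟩ : ∃ a l, (qrOf t r).1 = a :: l :=
      List.exists_cons_of_ne_nil h2
    simp only [List.replicate, List.nil_append, hal, Nat.add_zero, List.headI,
      List.tail_cons]
    rw [← hal]
  | succ k ih =>
    rw [List.replicate_succ, List.cons_append, qrOf_cons, if_neg (by decide),
      if_neg (by decide), ih]
    simp [Nat.add_assoc]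

theorem exists_decomp : ∀ (qs : List ℕ) (rs : List Bool),
    qs.length = rs.length → qs ≠ [] → qs.getLast? ≠ some 0 →
    ∃ d r, nodeOfQR qs rs = d ++ [1, trn r] ∧ qrOf d r = (qs, rs) := by
  intro qs
  induction qs with
  | nil => intro rs _ h; exact absurd rfl h
  | cons q qt ih =>
    intro rs hlen _ hlast
    obtain ⟨r0, rt, rfl⟩ : ∃ r0 rt, rs = r0 :: rt := by
      cases rs with
      | nil => simp at hlen
      | cons a b => exact ⟨a, b, rfl⟩
    cases qt with
    | nil =>
      have hrt : rt = [] := by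
        cases rt with
        | nil => rfl
        | cons a b => simp at hlen
      subst hrt
      obtain ⟨q', rfl⟩ : ∃ q', q = q' + 1 := by
        cases q with
        | zero => simp at hlast
        | succ n => exact ⟨n, rfl⟩
      refine ⟨List.replicate q' 1, r0, ?_, ?_⟩
      · rw [nodeOfQR_cons, List.replicate_succ']
        simp [nodeOfQR, trn]
      · rw [qrOf_replicate]
    | cons q2 qt2 =>
      obtain ⟨r2, rt2, rfl⟩ : ∃ r2 rt2, rt = r2 :: rt2 := by
        cases rt with
        | nil => simp at hlen
        | cons a b => exact ⟨a, b, rfl⟩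
      obtain ⟨d', r', hnode, hqr⟩ := ih (r2 :: rt2) (by simpa using hlen)
        (by simp) (by rwa [List.getLast?_cons_cons] at hlast)
      refine ⟨List.replicate q 1 ++ trn r0 :: d', r', ?_, ?_⟩
      · rw [nodeOfQR_cons, hnode]
        simp [trn]
      · rw [qrOf_replicate_append, qrOf_cons]
        cases r0 <;> simp [trn, hqr]

theorem decode_cons3 (a b c : Bool) (t : List Bool) :
    decode (a :: b :: c :: t) = qrOf (dec3 t).1 (dec3 t).2 := by
  cases a <;> cases b <;> cases c <;> rfl

theorem decode_piV0 (qs : List ℕ) (rs : List Bool) (h : ProperQR qs rs) :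
    decode (piV0 (nodeOfQR qs rs)) = (qs, rs) := by
  obtain ⟨hlen, hne, hlast⟩ := h
  by_cases hq : qs = [0]
  · subst hq
    obtain ⟨r, rfl⟩ : ∃ r, rs = [r] := by
      cases rs with
      | nil => simp at hlen
      | cons a b =>
        cases b with
        | nil => exact ⟨a, rfl⟩
        | cons c d => simp at hlen
    cases r <;> rfl
  · have hl : qs.getLast? ≠ some 0 := by
      rcases hlast with h1 | h2
      · obtain ⟨q, rfl⟩ : ∃ q, qs = [q] := List.length_eq_one_iff.mp h1
        simp only [List.getLast?_singleton, ne_eq, Option.some.injEq]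
        intro h; exact hq (by rw [h])
      · exact h2
    obtain ⟨d, r, hnode, hqr⟩ := exists_decomp qs rs hlen
      (List.ne_nil_of_length_pos (by omega)) hl
    rw [hnode, piV0_formula, decode_cons3, dec3_bmap]
    exact hqr

/-- For every vertex `u` of `T*` there is a unique node `N` of the
rhombus tree `H*` with a proper QR-encoding such that `π(N, v₀) = u`. -/
theorem unique_proper_encoding (u : List Bool) (hu : TstarVert u) :
    ∃! p : List ℕ × List Bool, ProperQR p.1 p.2 ∧ piV0 (nodeOfQR p.1 p.2) = u := by
  refine ⟨decode u, ⟨?_, ?_⟩, ?_⟩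
  · rcases hu with rfl | rfl | ⟨t, rfl⟩
    · exact ⟨rfl, Nat.le_refl 1, Or.inl rfl⟩
    · exact ⟨rfl, Nat.le_refl 1, Or.inl rfl⟩
    · obtain ⟨h1, h2, h3⟩ := qrOf_inv (dec3 t).1 (dec3 t).2
      rw [decode_cons3]
      exact ⟨h1, List.length_pos_iff.mpr h2, Or.inr h3⟩
  · rcases hu with rfl | rfl | ⟨t, rfl⟩
    · rfl
    · rfl
    · rw [decode_cons3]
      show piV0 (nodeOfQR (qrOf (dec3 t).1 (dec3 t).2).1
        (qrOf (dec3 t).1 (dec3 t).2).2) = _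
      rw [node_qrOf, piV0_formula, bmap_dec3]
  · rintro ⟨qs, rs⟩ ⟨hp, hv⟩
    have h := decode_piV0 qs rs hp
    rw [hv] at h
    exact h.symm
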